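/- For every real number d_r ≥ 2, the function c ↦ (d_r+2)·e^{−1/c} − d_r·e^{−(d_r+2)/(c·d_r − 1)} is strictly increasing on [1, ∞); that is, for all c₂ > c₁ ≥ 1, the value at c₂ is strictly greater than the value at c₁. Moreover, its limit as c → ∞ equals 2. -/

import Mathlib

open Real Filter

/-- The function `c ↦ (d_r+2) e^{-1/c} - d_r e^{-(d_r+2)/(c d_r-1)}` is strictly
increasing on `[1, ∞)` and tends to `2` as `c → ∞`. -/
theorem case3_term_increasing_and_limit (dr : ℝ) (hdr : 2 ≤ dr) :
    (∀ c₁ c₂ : ℝ, 1 ≤ c₁ → c₁ < c₂ →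
      (dr + 2) * Real.exp (-(1 / c₁)) - dr * Real.exp (-((dr + 2) / (c₁ * dr - 1)))
        < (dr + 2) * Real.exp (-(1 / c₂)) - dr * Real.exp (-((dr + 2) / (c₂ * dr - 1))))
    ∧ Filter.Tendsto
        (fun c : ℝ => (dr + 2) * Real.exp (-(1 / c)) - dr * Real.exp (-((dr + 2) / (c * dr - 1))))
        Filter.atTop (nhds 2) := by
  have hdr0 : (0:ℝ) < dr := by linarith
  set f : ℝ → ℝ := fun c =>
    (dr + 2) * Real.exp (-(1 / c)) - dr * Real.exp (-((dr + 2) / (c * dr - 1))) with hf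
  have hderiv : ∀ x : ℝ, 1 ≤ x → HasDerivAt f
      ((dr + 2) * (Real.exp (-(1/x)) * (x^2)⁻¹)
        - dr * (Real.exp (-((dr+2)/(x*dr-1))) * (dr * (dr+2) / (x*dr-1)^2))) x := by
    intro x hx
    have hx0 : (0:ℝ) < x := by linarith
    have hxd : (0:ℝ) < x * dr - 1 := by nlinarith
    have h1 : HasDerivAt (fun c : ℝ => -(1 / c)) ((x^2)⁻¹) x := by
      have := (hasDerivAt_inv hx0.ne').neg
      simp only [neg_neg] at this
      simp only [one_div]
      exact this
    have hlin : HasDerivAt (fun c : ℝ => c * dr - 1) dr x := by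
      simpa using ((hasDerivAt_id x).mul_const dr).sub_const 1
    have h2 : HasDerivAt (fun c : ℝ => -((dr + 2) / (c * dr - 1)))
        (dr * (dr + 2) / (x * dr - 1)^2) x := by
      have h := ((hlin.inv hxd.ne').const_mul (dr + 2)).neg
      have heq : -((dr + 2) * (-dr / (x * dr - 1) ^ 2)) = dr * (dr + 2) / (x * dr - 1)^2 := by
        field_simp
      have h' : HasDerivAt (fun c : ℝ => -((dr + 2) * (c * dr - 1)⁻¹))
          (dr * (dr + 2) / (x * dr - 1)^2) x := heq ▸ h
      simp only [div_eq_mul_inv]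
      exact h'
    rw [hf]
    exact ((h1.exp.const_mul (dr + 2)).sub (h2.exp.const_mul dr))
  constructor
  · have hmono : StrictMonoOn f (Set.Ici 1) := by
      apply strictMonoOn_of_deriv_pos (convex_Ici 1)
      · exact fun x hx => (hderiv x hx).continuousAt.continuousWithinAt
      · intro x hx
        rw [interior_Ici] at hx
        have hx1 : (1:ℝ) < x := hx
        have hx0 : (0:ℝ) < x := by linarith
        have hxd : (0:ℝ) < x * dr - 1 := by nlinarith
        rw [(hderiv x hx1.le).deriv]
        set a : ℝ := 1 / x with ha
        set b : ℝ := (dr + 2) / (x * dr - 1) with hb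
        have hba : 0 < b - a := by
          rw [hb, ha, div_sub_div _ _ hxd.ne' hx0.ne']
          apply div_pos
          · nlinarith
          · positivity
        have hexp : 1 + (b - a) < Real.exp (b - a) := by
          have := Real.add_one_lt_exp hba.ne'
          linarith
        have hAB : Real.exp (-a) = Real.exp (-b) * Real.exp (b - a) := by
          rw [← Real.exp_add]; ring_nf
        have heq : (x*dr-1)^2 * (1 + (b - a)) - dr^2 * x^2 = (x*dr - x - 1)/x := by
          rw [hb, ha]; field_simp; ring
        have hpos : 0 < (x*dr - x - 1)/x := by
          apply div_pos (by nlinarith) hx0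
        have hpoly : dr^2 * x^2 < (x*dr-1)^2 * (1 + (b - a)) := by linarith
        have key : dr^2 * x^2 * Real.exp (-b) < (x*dr-1)^2 * Real.exp (-a) := by
          have hEb : (0:ℝ) < Real.exp (-b) := Real.exp_pos _
          calc dr^2 * x^2 * Real.exp (-b)
              < ((x*dr-1)^2 * (1 + (b - a))) * Real.exp (-b) := by
                exact mul_lt_mul_of_pos_right hpoly hEb
            _ ≤ ((x*dr-1)^2 * Real.exp (b - a)) * Real.exp (-b) := by
                have h2 : (0:ℝ) ≤ (x*dr-1)^2 := sq_nonneg _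
                have := mul_le_mul_of_nonneg_left hexp.le h2
                exact mul_le_mul_of_nonneg_right this hEb.le
            _ = (x*dr-1)^2 * Real.exp (-a) := by
                rw [hAB]; ring
        have e1 : dr * (Real.exp (-b) * (dr * (dr+2) / (x*dr-1)^2))
            = (dr+2) * (dr^2 * x^2 * Real.exp (-b)) / (x^2 * (x*dr-1)^2) := by
          field_simp
        have e2 : (dr+2) * (Real.exp (-a) * (x^2)⁻¹)
            = (dr+2) * ((x*dr-1)^2 * Real.exp (-a)) / (x^2 * (x*dr-1)^2) := by
          have hxd' : dr * x - 1 ≠ 0 := by nlinarith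
          field_simp
        have hfinal : dr * (Real.exp (-b) * (dr * (dr+2) / (x*dr-1)^2))
            < (dr+2) * (Real.exp (-a) * (x^2)⁻¹) := by
          rw [e1, e2, div_lt_div_iff_of_pos_right (by positivity)]
          exact mul_lt_mul_of_pos_left key (by linarith)
        linarith
    intro c₁ c₂ h1 h12
    exact hmono (Set.mem_Ici.mpr h1) (Set.mem_Ici.mpr (h1.trans h12.le)) h12
  · have h1 : Tendsto (fun c : ℝ => -(1 / c)) atTop (nhds 0) := by
      have := tendsto_inv_atTop_zero (𝕜 := ℝ)
      simpa [one_div] using this.neg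
    have h2 : Tendsto (fun c : ℝ => -((dr + 2) / (c * dr - 1))) atTop (nhds 0) := by
      have hlin : Tendsto (fun c : ℝ => c * dr - 1) atTop atTop :=
        (tendsto_id.atTop_mul_const hdr0).atTop_add tendsto_const_nhds
      have := hlin.inv_tendsto_atTop
      have h := this.const_mul (dr + 2)
      simpa [div_eq_mul_inv] using h.neg
    have hlim := (((Real.continuous_exp.tendsto 0).comp h1).const_mul (dr + 2)).sub
      (((Real.continuous_exp.tendsto 0).comp h2).const_mul dr)
    have hlim2 : Tendsto f atTop (nhds ((dr + 2) * Real.exp 0 - dr * Real.exp 0)) := hlim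
    simpa using hlim2
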